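/- Let X be a nonempty set, 𝒟 a vector lattice of bounded real-valued functions on X with the Stone property, and (ℰ,𝒟) a nonnegative definite symmetric bilinear form on which the unit contraction operates. Then: (i) for every f ∈ 𝒟 with f ≥ 0 and every φ ∈ 𝒟 with 0 ≤ φ(x) ≤ 1 for all x and φ(x) = 1 whenever f(x) > 0, one has ℰ(f,φ) ≥ 0; (ii) for all f, g ∈ 𝒟 with f ≥ 0, g ≥ 0 and min(f(x),g(x)) = 0 for all x ∈ X, one has ℰ(f,g) ≤ 0. -/
import Mathlib


open Filter Topology

/-- The unit contraction `T₁(t) = min (max t 0) 1`. -/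
def unitContraction (t : ℝ) : ℝ := min (max t 0) 1

/-- Theorem: for a vector lattice `𝒟` with the Stone property and a nonnegative definite
symmetric bilinear form `(ℰ,𝒟)` on which the unit contraction operates:
(i) `ℰ(f,φ) ≥ 0` for nonnegative `f ∈ 𝒟` and `φ ∈ E_f`;
(ii) `ℰ(f,g) ≤ 0` for nonnegative `f, g ∈ 𝒟` with `f ∧ g = 0`. -/
theorem statement_5 {X : Type*} [Nonempty X] (𝒟 : Set (X → ℝ))
    (ℰ : (X → ℝ) → (X → ℝ) → ℝ)
    (hbdd : ∀ f ∈ 𝒟, ∃ C : ℝ, ∀ x, |f x| ≤ C)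
    (hadd : ∀ f ∈ 𝒟, ∀ g ∈ 𝒟, f + g ∈ 𝒟)
    (hsmul : ∀ c : ℝ, ∀ f ∈ 𝒟, c • f ∈ 𝒟)
    (hmax : ∀ f ∈ 𝒟, ∀ g ∈ 𝒟, (fun x => max (f x) (g x)) ∈ 𝒟)
    (hmin : ∀ f ∈ 𝒟, ∀ g ∈ 𝒟, (fun x => min (f x) (g x)) ∈ 𝒟)
    (hstone : ∀ f ∈ 𝒟, (fun x => min (f x) 1) ∈ 𝒟)
    (hsym : ∀ f ∈ 𝒟, ∀ g ∈ 𝒟, ℰ f g = ℰ g f)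
    (hlin_add : ∀ f ∈ 𝒟, ∀ g ∈ 𝒟, ∀ h ∈ 𝒟, ℰ (f + g) h = ℰ f h + ℰ g h)
    (hlin_smul : ∀ c : ℝ, ∀ f ∈ 𝒟, ∀ g ∈ 𝒟, ℰ (c • f) g = c * ℰ f g)
    (hnonneg : ∀ f ∈ 𝒟, 0 ≤ ℰ f f)
    (hT1 : ∀ f ∈ 𝒟, unitContraction ∘ f ∈ 𝒟 ∧
      ℰ (unitContraction ∘ f) (unitContraction ∘ f) ≤ ℰ f f) :
    (∀ f ∈ 𝒟, (∀ x, 0 ≤ f x) → ∀ φ ∈ 𝒟, (∀ x, 0 ≤ φ x ∧ φ x ≤ 1) →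
      (∀ x, 0 < f x → φ x = 1) → 0 ≤ ℰ f φ) ∧
    (∀ f ∈ 𝒟, ∀ g ∈ 𝒟, (∀ x, 0 ≤ f x) → (∀ x, 0 ≤ g x) →
      (∀ x, min (f x) (g x) = 0) → ℰ f g ≤ 0) := by
  -- Key lemma: if `T₁∘(ψ + a•u) = ψ` for all `a > 0`, then `ℰ(u,ψ) ≥ 0`.
  have key : ∀ ψ ∈ 𝒟, ∀ u ∈ 𝒟,
      (∀ a : ℝ, 0 < a → (unitContraction ∘ (ψ + a • u)) = ψ) → 0 ≤ ℰ u ψ := by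
    intro ψ hψ u hu hfix
    have main : ∀ a : ℝ, 0 < a → 0 ≤ 2 * a * ℰ u ψ + a ^ 2 * ℰ u u := by
      intro a ha
      have hau : a • u ∈ 𝒟 := hsmul a u hu
      have hS : ψ + a • u ∈ 𝒟 := hadd ψ hψ (a • u) hau
      have hcontr := (hT1 (ψ + a • u) hS).2
      rw [hfix a ha] at hcontr
      -- expand ℰ (ψ + a•u) (ψ + a•u)
      have e1 : ℰ (ψ + a • u) (ψ + a • u)
          = ℰ ψ ψ + 2 * a * ℰ u ψ + a ^ 2 * ℰ u u := by
        rw [hlin_add ψ hψ (a • u) hau (ψ + a • u) hS,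
          hsym ψ hψ (ψ + a • u) hS,
          hlin_add ψ hψ (a • u) hau ψ hψ,
          hlin_smul a u hu ψ hψ,
          hsym (a • u) hau (ψ + a • u) hS,
          hlin_add ψ hψ (a • u) hau (a • u) hau,
          hsym ψ hψ (a • u) hau,
          hlin_smul a u hu (a • u) hau,
          hsym u hu (a • u) hau,
          hlin_smul a u hu u hu,
          hlin_smul a u hu ψ hψ]
        ring
      rw [e1] at hcontr
      linarith
    by_contra hneg
    push_neg at hneg
    set E := ℰ u ψ with hE
    set F := ℰ u u with hF
    have hF0 : 0 ≤ F := hnonneg u hu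
    have ha : (0:ℝ) < -E / (F + 1) := div_pos (by linarith) (by linarith)
    have := main (-E / (F + 1)) ha
    have haF : -E / (F + 1) * F ≤ -E := by
      have h1 : -E / (F + 1) * F ≤ -E / (F + 1) * (F + 1) := by nlinarith
      have h2 : -E / (F + 1) * (F + 1) = -E := by field_simp
      linarith
    nlinarith
  constructor
  · -- Part (i)
    intro f hf hfpos φ hφ hφ01 hφ1
    have hfix : ∀ a : ℝ, 0 < a → (unitContraction ∘ (φ + a • f)) = φ := by
      intro a ha
      funext x
      simp only [Function.comp_apply, Pi.add_apply, Pi.smul_apply, smul_eq_mul]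
      rcases lt_or_eq_of_le (hfpos x) with hx | hx
      · have h1 : φ x = 1 := hφ1 x hx
        have h2 : (1:ℝ) ≤ φ x + a * f x := by nlinarith
        rw [unitContraction, max_eq_left (by linarith), min_eq_right h2, h1]
      · rw [← hx, mul_zero, add_zero, unitContraction,
          max_eq_left (hφ01 x).1, min_eq_left (hφ01 x).2]
    exact key φ hφ f hf hfix
  · -- Part (ii)
    intro f hf g hg hfpos hgpos hdisj
    obtain ⟨C, hC⟩ := hbdd f hf
    set c : ℝ := max C 1 with hc
    have hc0 : (0:ℝ) < c := lt_of_lt_of_le one_pos (le_max_right _ _)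
    set ψ : X → ℝ := (1 / c) • f with hψdef
    have hψ : ψ ∈ 𝒟 := hsmul (1 / c) f hf
    have hng : (-1 : ℝ) • g ∈ 𝒟 := hsmul (-1) g hg
    have hfix : ∀ a : ℝ, 0 < a → (unitContraction ∘ (ψ + a • ((-1 : ℝ) • g))) = ψ := by
      intro a ha
      funext x
      simp only [hψdef, Function.comp_apply, Pi.add_apply, Pi.smul_apply, smul_eq_mul]
      rcases lt_or_eq_of_le (hgpos x) with hx | hx
      · have hfx : f x = 0 := by
          have := hdisj x
          rcases le_total (f x) (g x) with h | h
          · rwa [min_eq_left h] at this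
          · rw [min_eq_right h] at this; linarith
        have : 1 / c * f x + a * (-1 * g x) ≤ 0 := by
          rw [hfx, mul_zero, zero_add]; nlinarith
        rw [unitContraction, max_eq_right this, min_eq_left zero_le_one, hfx, mul_zero]
      · rw [← hx, mul_zero, mul_zero, add_zero]
        have h0 : 0 ≤ 1 / c * f x := mul_nonneg (le_of_lt (one_div_pos.mpr hc0)) (hfpos x)
        have h1 : 1 / c * f x ≤ 1 := by
          have hfC : f x ≤ c := le_trans (le_trans (le_abs_self _) (hC x)) (le_max_left _ _)
          rw [div_mul_eq_mul_div, one_mul, div_le_one hc0]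
          exact hfC
        rw [unitContraction, max_eq_left h0, min_eq_left h1]
    have hk := key ψ hψ ((-1 : ℝ) • g) hng hfix
    have e1 : ℰ ((-1 : ℝ) • g) ψ = -(ℰ g ψ) := by
      rw [hlin_smul (-1) g hg ψ hψ]; ring
    have e2 : ℰ g ψ = (1 / c) * ℰ f g := by
      rw [hsym g hg ψ hψ, hψdef, hlin_smul (1 / c) f hf g hg]
    rw [e1, e2] at hk
    have : (1 / c) * ℰ f g ≤ 0 := by linarith
    nlinarith [one_div_pos.mpr hc0]
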